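/- Let B have basis {b_1,…,b_n} and let χ : A⊗B → B⊗A be given by χ(a⊗b_i) = Σ_j b_j ⊗ γ_i^j(a) for K-linear maps γ_i^j : A → A. Then χ is a twisting map if and only if: (1) γ_i^j(1) = δ_{ij}·1; (2) γ_i^k(aa') = Σ_j γ_j^k(a)γ_i^j(a') for all a,a'; (3) α_k·id_A = Σ_i α_i γ_i^k where 1_B = Σ_i α_i b_i; (4) Σ_k λ^k_{ij} γ_k^m = Σ_k Σ_l λ^m_{kl} (γ^l_j ∘ γ^k_i) for all i,j,m. -/

import Mathlib

open TensorProduct LinearMap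

variable (K : Type*)

def IsTwistingMap {A B : Type*} [Field K] [Ring A] [Ring B] [Algebra K A] [Algebra K B]
    (χ : A ⊗[K] B →ₗ[K] B ⊗[K] A) : Prop :=
  (∀ b : B, χ ((1 : A) ⊗ₜ[K] b) = b ⊗ₜ[K] (1 : A)) ∧
  (∀ a : A, χ (a ⊗ₜ[K] (1 : B)) = (1 : B) ⊗ₜ[K] a) ∧
  (∀ (a a' : A) (b : B),
    χ ((a * a') ⊗ₜ[K] b) =
      lTensor B (mul' K A)
        (TensorProduct.assoc K B A A
          (rTensor A χ
            ((TensorProduct.assoc K A B A).symm (a ⊗ₜ[K] χ (a' ⊗ₜ[K] b)))))) ∧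
  (∀ (a : A) (b b' : B),
    χ (a ⊗ₜ[K] (b * b')) =
      rTensor A (mul' K B)
        ((TensorProduct.assoc K B B A).symm
          (lTensor B χ
            (TensorProduct.assoc K B A B (χ (a ⊗ₜ[K] b) ⊗ₜ[K] b')))))

noncomputable def twistMul {A B : Type*} [Field K] [Ring A] [Ring B] [Algebra K A] [Algebra K B]
    (χ : A ⊗[K] B →ₗ[K] B ⊗[K] A) :
    (B ⊗[K] A) ⊗[K] (B ⊗[K] A) →ₗ[K] B ⊗[K] A :=
  TensorProduct.map (mul' K B) (mul' K A)
    ∘ₗ (TensorProduct.assoc K B B (A ⊗[K] A)).symm.toLinearMap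
    ∘ₗ lTensor B (TensorProduct.assoc K B A A).toLinearMap
    ∘ₗ lTensor B (rTensor A χ)
    ∘ₗ lTensor B (TensorProduct.assoc K A B A).symm.toLinearMap
    ∘ₗ (TensorProduct.assoc K B A (B ⊗[K] A)).toLinearMap

section Aux

set_option synthInstance.maxHeartbeats 1000000
set_option maxHeartbeats 2000000

variable {K A B : Type*} [Field K] [Ring A] [Ring B] [Algebra K A] [Algebra K B]
    {n : ℕ} (b : Module.Basis (Fin n) K B) (lam : Fin n → Fin n → Fin n → K)
    (χ : A ⊗[K] B →ₗ[K] B ⊗[K] A) (γ : Fin n → Fin n → (A →ₗ[K] A))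
    (hχ : ∀ (a : A) (i : Fin n), χ (a ⊗ₜ[K] b i) = ∑ j : Fin n, b j ⊗ₜ[K] γ i j a)

lemma aux_inj {x y : Fin n → A}
    (h : (∑ j : Fin n, b j ⊗ₜ[K] x j) = (∑ j : Fin n, b j ⊗ₜ[K] y j)) : ∀ j, x j = y j := by
  intro j
  have := congrArg ((TensorProduct.lid K A).toLinearMap ∘ₗ rTensor A (b.coord j)) h
  simpa [Finsupp.single_apply, ite_smul, Finset.sum_ite_eq', eq_comm] using this

include hχ in
lemma rhs3 (a a' : A) (i : Fin n) :
    lTensor B (mul' K A)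
        (TensorProduct.assoc K B A A
          (rTensor A χ
            ((TensorProduct.assoc K A B A).symm (a ⊗ₜ[K] χ (a' ⊗ₜ[K] b i))))) =
    ∑ k : Fin n, b k ⊗ₜ[K] (∑ j : Fin n, γ j k a * γ i j a') := by
  rw [hχ]
  simp only [tmul_sum, map_sum, assoc_symm_tmul, rTensor_tmul, hχ, sum_tmul, assoc_tmul,
    lTensor_tmul, mul'_apply]
  rw [Finset.sum_comm]

include hχ in
lemma rhs4 (hlam : ∀ i j : Fin n, b i * b j = ∑ k : Fin n, lam i j k • b k)
    (a : A) (i j : Fin n) :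
    rTensor A (mul' K B)
        ((TensorProduct.assoc K B B A).symm
          (lTensor B χ
            (TensorProduct.assoc K B A B (χ (a ⊗ₜ[K] b i) ⊗ₜ[K] b j)))) =
    ∑ m : Fin n, b m ⊗ₜ[K] (∑ k : Fin n, ∑ l : Fin n, lam k l m • γ j l (γ i k a)) := by
  rw [hχ]
  simp only [sum_tmul, map_sum, assoc_tmul, lTensor_tmul, hχ, tmul_sum, assoc_symm_tmul,
    rTensor_tmul, mul'_apply, hlam, smul_tmul']
  simp only [smul_tmul]
  trans ∑ k : Fin n, ∑ m : Fin n, ∑ l : Fin n, b m ⊗ₜ[K] (lam k l m • γ j l (γ i k a))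
  · exact Finset.sum_congr rfl fun k _ => Finset.sum_comm
  · exact Finset.sum_comm

include hχ in
lemma lhs4 (hlam : ∀ i j : Fin n, b i * b j = ∑ k : Fin n, lam i j k • b k)
    (a : A) (i j : Fin n) :
    χ (a ⊗ₜ[K] (b i * b j)) =
      ∑ m : Fin n, b m ⊗ₜ[K] (∑ k : Fin n, lam i j k • γ k m a) := by
  rw [hlam]
  simp only [tmul_sum, tmul_smul, map_sum, map_smul, hχ, Finset.smul_sum]
  rw [Finset.sum_comm]

end Aux

set_option synthInstance.maxHeartbeats 1000000 in
set_option maxHeartbeats 2000000 in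
theorem twisting_map_iff_gamma_conditions {A B : Type*} [Field K] [Ring A] [Ring B]
    [Algebra K A] [Algebra K B] {n : ℕ}
    (b : Module.Basis (Fin n) K B) (lam : Fin n → Fin n → Fin n → K)
    (hlam : ∀ i j : Fin n, b i * b j = ∑ k : Fin n, lam i j k • b k)
    (α : Fin n → K) (hα : (1 : B) = ∑ i : Fin n, α i • b i)
    (χ : A ⊗[K] B →ₗ[K] B ⊗[K] A) (γ : Fin n → Fin n → (A →ₗ[K] A))
    (hχ : ∀ (a : A) (i : Fin n), χ (a ⊗ₜ[K] b i) = ∑ j : Fin n, b j ⊗ₜ[K] γ i j a) :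
    IsTwistingMap K χ ↔
      ((∀ i j : Fin n, γ i j (1 : A) = if i = j then 1 else 0) ∧
       (∀ (i k : Fin n) (a a' : A), γ i k (a * a') = ∑ j : Fin n, γ j k a * γ i j a') ∧
       (∀ (k : Fin n) (a : A), α k • a = ∑ i : Fin n, α i • γ i k a) ∧
       (∀ (i j m : Fin n) (a : A),
          ∑ k : Fin n, lam i j k • γ k m a =
            ∑ k : Fin n, ∑ l : Fin n, lam k l m • γ j l (γ i k a))) := by
  constructor
  · rintro ⟨H1, H2, H3, H4⟩
    refine ⟨?_, ?_, ?_, ?_⟩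
    · intro i j
      have h := H1 (b i)
      rw [hχ] at h
      have h2 : b i ⊗ₜ[K] (1 : A) =
          ∑ j : Fin n, b j ⊗ₜ[K] (if i = j then (1 : A) else 0) := by
        simp [TensorProduct.tmul_ite]
      exact aux_inj b (h.trans h2) j
    · intro i k a a'
      have h := H3 a a' (b i)
      rw [hχ, rhs3 b χ γ hχ] at h
      exact aux_inj b h k
    · intro k a
      have h := H2 a
      have hL : χ (a ⊗ₜ[K] (1 : B)) = ∑ j : Fin n, b j ⊗ₜ[K] (∑ i : Fin n, α i • γ i j a) := by
        rw [hα]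
        simp only [tmul_sum, tmul_smul, map_sum, map_smul, hχ, Finset.smul_sum]
        rw [Finset.sum_comm]
      have hR : (1 : B) ⊗ₜ[K] a = ∑ j : Fin n, b j ⊗ₜ[K] (α j • a) := by
        rw [hα]
        simp [sum_tmul, smul_tmul]
      exact (aux_inj b ((hL.symm.trans h).trans hR) k).symm
    · intro i j m a
      have h := H4 a (b i) (b j)
      rw [lhs4 b lam χ γ hχ hlam, rhs4 b lam χ γ hχ hlam] at h
      exact aux_inj b h m
  · rintro ⟨G1, G2, G3, G4⟩
    refine ⟨?_, ?_, ?_, ?_⟩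
    · intro bb
      have hbb : bb = ∑ i : Fin n, b.repr bb i • b i := (b.sum_repr bb).symm
      rw [hbb]
      simp only [tmul_sum, tmul_smul, map_sum, map_smul, hχ, G1, sum_tmul, smul_tmul',
        TensorProduct.tmul_ite]
      simp [smul_ite, Finset.sum_ite_eq, smul_tmul']
    · intro a
      rw [hα]
      simp only [tmul_sum, tmul_smul, map_sum, map_smul, hχ, Finset.smul_sum, sum_tmul,
        smul_tmul]
      rw [Finset.sum_comm]
      refine Finset.sum_congr rfl fun j _ => ?_
      simp only [← tmul_smul, ← tmul_sum]
      congr 1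
      exact (G3 j a).symm
    · intro a a' bb
      have eq3 : ∀ i : Fin n, χ ((a * a') ⊗ₜ[K] b i) =
          lTensor B (mul' K A)
            (TensorProduct.assoc K B A A
              (rTensor A χ
                ((TensorProduct.assoc K A B A).symm (a ⊗ₜ[K] χ (a' ⊗ₜ[K] b i))))) := by
        intro i
        rw [hχ, rhs3 b χ γ hχ]
        exact Finset.sum_congr rfl fun k _ => by rw [G2]
      have hbb : bb = ∑ i : Fin n, b.repr bb i • b i := (b.sum_repr bb).symm
      rw [hbb]
      simp only [tmul_sum, tmul_smul, map_sum, map_smul, eq3]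
    · intro a₀ bb bb'
      have eq4 : ∀ (a : A) (i j : Fin n), χ (a ⊗ₜ[K] (b i * b j)) =
          rTensor A (mul' K B)
            ((TensorProduct.assoc K B B A).symm
              (lTensor B χ
                (TensorProduct.assoc K B A B (χ (a ⊗ₜ[K] b i) ⊗ₜ[K] b j)))) := by
        intro a i j
        rw [lhs4 b lam χ γ hχ hlam, rhs4 b lam χ γ hχ hlam]
        exact Finset.sum_congr rfl fun m _ => by rw [G4]
      have hbb : bb = ∑ i : Fin n, b.repr bb i • b i := (b.sum_repr bb).symm
      have hbb' : bb' = ∑ j : Fin n, b.repr bb' j • b j := (b.sum_repr bb').symm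
      rw [hbb, hbb']
      simp only [Finset.sum_mul, Finset.mul_sum, smul_mul_assoc, mul_smul_comm,
        tmul_sum, tmul_smul, map_sum, map_smul, sum_tmul, smul_tmul', eq4]
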